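/- Let A and B be real symmetric n×n matrices and suppose there exist σ₁ ≠ σ₂ in ℝ such that A + σ₁B and A + σ₂B are both positive semidefinite. Then A and B are simultaneously diagonalizable via congruence. -/

import Mathlib

open Matrix

lemma psd_diag_nonneg {m : ℕ} {S : Matrix (Fin m) (Fin m) ℝ} (hS : S.PosSemidef)
    (i : Fin m) : 0 ≤ S i i := by
  exact hS.diag_nonneg

lemma psd_col_zero {m : ℕ} {S : Matrix (Fin m) (Fin m) ℝ} (hS : S.PosSemidef)
    {i : Fin m} (h : S i i = 0) (j : Fin m) : S j i = 0 := by
  have h0 : S *ᵥ Pi.single i 1 = 0 := by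
    rw [← hS.dotProduct_mulVec_zero_iff]
    simpa [mulVec_single, single_dotProduct] using h
  have := congrFun h0 j
  simpa [mulVec_single] using this

lemma psd_row_zero {m : ℕ} {S : Matrix (Fin m) (Fin m) ℝ} (hS : S.PosSemidef)
    {i : Fin m} (h : S i i = 0) (j : Fin m) : S i j = 0 := by
  have hsym := congrFun (congrFun hS.1 j) i
  simp only [conjTranspose_apply, star_trivial] at hsym
  rw [hsym]
  exact psd_col_zero hS h j

lemma mul_diag_apply {m : ℕ} {X D : Matrix (Fin m) (Fin m) ℝ} (hD : D.IsDiag)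
    (i j : Fin m) : (X * D) i j = X i j * D j j := by
  rw [mul_apply]
  apply Finset.sum_eq_single j
  · intro k _ hk
    rw [hD hk, mul_zero]
  · simp

lemma diag_mul_apply {m : ℕ} {X D : Matrix (Fin m) (Fin m) ℝ} (hD : D.IsDiag)
    (i j : Fin m) : (D * X) i j = D i i * X i j := by
  rw [mul_apply]
  apply Finset.sum_eq_single i
  · intro k _ hk
    rw [hD hk.symm, zero_mul]
  · simp

lemma proj_isDiag {m : ℕ} {P Q : Matrix (Fin m) (Fin m) ℝ}
    (hP : P.PosSemidef) (hQs : Qᵀ = Q) (hQ2 : Q * Q = Q)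
    (hPQ : P * Q = 0) (hQP : Q * P = 0) (hD : (P - Q).IsDiag) : Q.IsDiag := by
  have hQD : Q * (P - Q) = -Q := by rw [mul_sub, hQP, hQ2, zero_sub]
  have hDQ : (P - Q) * Q = -Q := by rw [sub_mul, hPQ, hQ2, zero_sub]
  intro i j hij
  by_contra hq
  have e1 : Q i j * (P - Q) j j = -Q i j := by
    have := congrFun (congrFun hQD i) j
    rwa [mul_diag_apply hD] at this
  have e2 : (P - Q) i i * Q i j = -Q i j := by
    have := congrFun (congrFun hDQ i) j
    rwa [diag_mul_apply hD] at this
  have hDjj : (P - Q) j j = -1 := by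
    have : Q i j * (P - Q) j j = Q i j * (-1) := by rw [e1]; ring
    exact mul_left_cancel₀ hq this
  have hDii : (P - Q) i i = -1 := by
    have : (P - Q) i i * Q i j = (-1) * Q i j := by rw [e2]; ring
    exact mul_right_cancel₀ hq this
  have hPii : 0 ≤ P i i := psd_diag_nonneg hP i
  have hQii : 1 ≤ Q i i := by
    have : P i i - Q i i = -1 := by simpa using hDii
    linarith
  have hQsum : Q i i = ∑ k, (Q i k)^2 := by
    have := congrFun (congrFun hQ2 i) i
    rw [mul_apply] at this
    rw [← this]
    apply Finset.sum_congr rfl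
    intro k _
    have : Q k i = Q i k := by
      have := congrFun (congrFun hQs k) i
      simpa [transpose_apply] using this.symm
    rw [this, sq]
  have hge : (Q i i)^2 + (Q i j)^2 ≤ Q i i := by
    conv_rhs => rw [hQsum]
    have hsub : ({i, j} : Finset (Fin m)) ⊆ Finset.univ := Finset.subset_univ _
    calc (Q i i)^2 + (Q i j)^2 = ∑ k ∈ ({i, j} : Finset (Fin m)), (Q i k)^2 := by
          rw [Finset.sum_pair hij]
      _ ≤ ∑ k, (Q i k)^2 :=
          Finset.sum_le_sum_of_subset_of_nonneg hsub (fun k _ _ => sq_nonneg _)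
  have hq2 : 0 < (Q i j)^2 := by positivity
  nlinarith

lemma sdc_psd {m : ℕ} {S1 S2 : Matrix (Fin m) (Fin m) ℝ}
    (h1 : S1.PosSemidef) (h2 : S2.PosSemidef) :
    ∃ C : Matrix (Fin m) (Fin m) ℝ, IsUnit C.det ∧ (Cᵀ * S1 * C).IsDiag ∧ (Cᵀ * S2 * C).IsDiag := by
  classical
  have hS : (S1 + S2).PosSemidef := h1.add h2
  have hH : (S1 + S2).IsHermitian := hS.1
  set d : Fin m → ℝ := hH.eigenvalues with hd
  set U : Matrix (Fin m) (Fin m) ℝ := (hH.eigenvectorUnitary : Matrix (Fin m) (Fin m) ℝ) with hU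
  have hUU' : U * star U = 1 := mem_unitaryGroup_iff.mp (hH.eigenvectorUnitary).2
  have hspec : star U * (S1 + S2) * U = diagonal d := by
    have := hH.conjStarAlgAut_star_eigenvectorUnitary
    simpa [RCLike.ofReal_real_eq_id, Function.comp] using this
  have hdnn : ∀ i, 0 ≤ d i := fun i => hS.eigenvalues_nonneg i
  set e : Fin m → ℝ := fun i => if d i = 0 then 1 else (Real.sqrt (d i))⁻¹ with he
  have hene : ∀ i, e i ≠ 0 := by
    intro i
    by_cases h : d i = 0
    · simp [he, h]
    · simp only [he, h, if_false]
      exact inv_ne_zero (Real.sqrt_ne_zero'.mpr (lt_of_le_of_ne (hdnn i) (Ne.symm h)))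
  set C₁ : Matrix (Fin m) (Fin m) ℝ := U * diagonal e with hC₁
  have hdetU : IsUnit U.det := IsUnit.of_mul_eq_one _ (by rw [← det_mul, hUU', det_one])
  have hdetC₁ : IsUnit C₁.det := by
    rw [hC₁, det_mul, det_diagonal]
    exact hdetU.mul (isUnit_iff_ne_zero.mpr (Finset.prod_ne_zero_iff.mpr fun i _ => hene i))
  have hsU : star U = Uᵀ := by
    rw [star_eq_conjTranspose, conjTranspose_eq_transpose_of_trivial]
  have hC₁T : C₁ᵀ = diagonal e * star U := by
    rw [hC₁, transpose_mul, diagonal_transpose, hsU]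
  set j0 : Fin m → ℝ := fun i => e i * d i * e i with hj0
  have hj01 : ∀ i, j0 i = 0 ∨ j0 i = 1 := by
    intro i
    by_cases h : d i = 0
    · left; simp [hj0, h]
    · right
      have hdi : 0 < d i := lt_of_le_of_ne (hdnn i) (Ne.symm h)
      have hs : Real.sqrt (d i) * Real.sqrt (d i) = d i := Real.mul_self_sqrt (hdnn i)
      have hsne : Real.sqrt (d i) ≠ 0 := Real.sqrt_ne_zero'.mpr hdi
      simp only [hj0, he, h, if_false]
      field_simp
      rw [Real.sq_sqrt (hdnn i)]
  set T1 : Matrix (Fin m) (Fin m) ℝ := C₁ᵀ * S1 * C₁ with hT1def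
  set T2 : Matrix (Fin m) (Fin m) ℝ := C₁ᵀ * S2 * C₁ with hT2def
  have hT1 : T1.PosSemidef := by
    have := h1.conjTranspose_mul_mul_same C₁
    rwa [conjTranspose_eq_transpose_of_trivial] at this
  have hT2 : T2.PosSemidef := by
    have := h2.conjTranspose_mul_mul_same C₁
    rwa [conjTranspose_eq_transpose_of_trivial] at this
  have hsum : T1 + T2 = diagonal j0 := by
    have h' : T1 + T2 = C₁ᵀ * (S1 + S2) * C₁ := by
      rw [hT1def, hT2def, mul_add, add_mul]
    rw [h', hC₁T, hC₁]
    have regroup : diagonal e * star U * (S1 + S2) * (U * diagonal e)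
        = diagonal e * (star U * (S1 + S2) * U) * diagonal e := by
      simp only [mul_assoc]
    rw [regroup, hspec, diagonal_mul_diagonal, diagonal_mul_diagonal]
  have hT1ii : ∀ i, j0 i = 0 → T1 i i = 0 := by
    intro i h0
    have hs := congrFun (congrFun hsum i) i
    simp only [Matrix.add_apply, diagonal_apply_eq] at hs
    have := psd_diag_nonneg hT1 i
    have := psd_diag_nonneg hT2 i
    rw [h0] at hs
    linarith
  set K : Matrix (Fin m) (Fin m) ℝ := diagonal (fun i => 1 - j0 i) with hK
  have hKd : K.IsDiag := isDiag_diagonal _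
  have hT1K : T1 * K = 0 := by
    ext i k
    rw [mul_diag_apply hKd, hK]
    simp only [diagonal_apply_eq, Matrix.zero_apply]
    rcases hj01 k with h | h
    · rw [psd_col_zero hT1 (hT1ii k h) i, zero_mul]
    · rw [h]; ring
  have hKT1 : K * T1 = 0 := by
    ext i k
    rw [diag_mul_apply hKd, hK]
    simp only [diagonal_apply_eq, Matrix.zero_apply]
    rcases hj01 i with h | h
    · rw [psd_row_zero hT1 (hT1ii i h) k, mul_zero]
    · rw [h]; ring
  have hK2 : K * K = K := by
    rw [hK, diagonal_mul_diagonal]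
    ext i k
    by_cases hik : i = k
    · subst hik
      simp only [diagonal_apply_eq]
      rcases hj01 i with h | h <;> rw [h] <;> ring
    · rw [diagonal_apply_ne _ hik, diagonal_apply_ne _ hik]
  have hKH : K.IsHermitian := isHermitian_diagonal _
  have hMH : (T1 - K).IsHermitian := hT1.1.sub hKH
  set V : Matrix (Fin m) (Fin m) ℝ := (hMH.eigenvectorUnitary : Matrix (Fin m) (Fin m) ℝ) with hV
  have hVV : star V * V = 1 := mem_unitaryGroup_iff'.mp (hMH.eigenvectorUnitary).2
  have hVV' : V * star V = 1 := mem_unitaryGroup_iff.mp (hMH.eigenvectorUnitary).2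
  have hspec2 : star V * (T1 - K) * V = diagonal hMH.eigenvalues := by
    have := hMH.conjStarAlgAut_star_eigenvectorUnitary
    simpa [RCLike.ofReal_real_eq_id, Function.comp] using this
  have cancelV : ∀ X : Matrix (Fin m) (Fin m) ℝ, V * (star V * X) = X := by
    intro X; rw [← mul_assoc, hVV', one_mul]
  set P : Matrix (Fin m) (Fin m) ℝ := star V * T1 * V with hP
  set Q : Matrix (Fin m) (Fin m) ℝ := star V * K * V with hQ
  have hsV : star V = Vᵀ := by
    rw [star_eq_conjTranspose, conjTranspose_eq_transpose_of_trivial]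
  have hPpsd : P.PosSemidef := by
    have := hT1.conjTranspose_mul_mul_same V
    rw [hP, hsV, ← conjTranspose_eq_transpose_of_trivial]
    exact this
  have hQs : Qᵀ = Q := by
    rw [hQ, hsV, transpose_mul, transpose_mul, transpose_transpose]
    have : Kᵀ = K := diagonal_transpose _
    rw [this, mul_assoc]
  have hQ2 : Q * Q = Q := by
    rw [hQ]
    calc star V * K * V * (star V * K * V)
        = star V * K * (V * (star V * (K * V))) := by simp only [mul_assoc]
      _ = star V * K * (K * V) := by rw [cancelV]
      _ = star V * K * V := by
          rw [show star V * K * (K * V) = star V * (K * K) * V by simp only [mul_assoc], hK2]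
  have hPQ : P * Q = 0 := by
    rw [hP, hQ]
    calc star V * T1 * V * (star V * K * V)
        = star V * T1 * (K * V) := by
          simp only [mul_assoc]; rw [cancelV]
      _ = star V * (T1 * K) * V := by simp only [mul_assoc]
      _ = 0 := by rw [hT1K, mul_zero, zero_mul]
  have hQP : Q * P = 0 := by
    rw [hP, hQ]
    calc star V * K * V * (star V * T1 * V)
        = star V * K * (T1 * V) := by
          simp only [mul_assoc]; rw [cancelV]
      _ = star V * (K * T1) * V := by simp only [mul_assoc]
      _ = 0 := by rw [hKT1, mul_zero, zero_mul]
  have hPQdiff : P - Q = diagonal hMH.eigenvalues := by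
    rw [hP, hQ, ← hspec2, mul_sub, sub_mul]
  have hDdiag : (P - Q).IsDiag := by rw [hPQdiff]; exact isDiag_diagonal _
  have hQdiag : Q.IsDiag := proj_isDiag hPpsd hQs hQ2 hPQ hQP hDdiag
  have hPdiag : P.IsDiag := by
    have := hDdiag.add hQdiag
    simpa using this
  refine ⟨C₁ * V, ?_, ?_, ?_⟩
  · rw [det_mul]
    exact hdetC₁.mul (IsUnit.of_mul_eq_one _ (by rw [← det_mul, hVV', det_one]))
  · have : (C₁ * V)ᵀ * S1 * (C₁ * V) = P := by
      rw [hP, hsV, transpose_mul, hT1def]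
      simp only [mul_assoc]
    rw [this]; exact hPdiag
  · have hT2eq : T2 = diagonal j0 - T1 := by rw [← hsum]; abel
    have hdJ : (diagonal j0 : Matrix (Fin m) (Fin m) ℝ) = 1 - K := by
      rw [hK]
      ext i k
      by_cases h : i = k
      · subst h; simp
      · simp [diagonal_apply_ne _ h, one_apply_ne h]
    have : (C₁ * V)ᵀ * S2 * (C₁ * V) = 1 - Q - P := by
      rw [transpose_mul, show Vᵀ * C₁ᵀ * S2 * (C₁ * V) = Vᵀ * (C₁ᵀ * S2 * C₁) * V by
        simp only [mul_assoc], ← hT2def, hT2eq, hdJ, ← hsV]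
      rw [sub_sub, mul_sub, sub_mul, mul_one, hVV, mul_add, add_mul, ← hQ, ← hP]
      abel
    rw [this]
    exact (isDiag_one.sub hQdiag).sub hPdiag

/-- if `A + σ₁B ≽ 0` and `A + σ₂B ≽ 0` for `σ₁ ≠ σ₂`, then `A` and `B`
are simultaneously diagonalizable via congruence. -/
theorem stmt_7 {n : ℕ} (A B : Matrix (Fin n) (Fin n) ℝ)
    (hA : A.IsSymm) (hB : B.IsSymm) (σ₁ σ₂ : ℝ) (hne : σ₁ ≠ σ₂)
    (h₁ : (A + σ₁ • B).PosSemidef) (h₂ : (A + σ₂ • B).PosSemidef) :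
    ∃ C : Matrix (Fin n) (Fin n) ℝ, IsUnit C.det ∧ (Cᵀ * A * C).IsDiag ∧ (Cᵀ * B * C).IsDiag := by
  obtain ⟨C, hdet, hD1, hD2⟩ := sdc_psd h₁ h₂
  have hσ : σ₂ - σ₁ ≠ 0 := sub_ne_zero.mpr (Ne.symm hne)
  have hBeq : B = (σ₂ - σ₁)⁻¹ • ((A + σ₂ • B) - (A + σ₁ • B)) := by
    rw [add_sub_add_left_eq_sub, ← sub_smul, smul_smul, inv_mul_cancel₀ hσ, one_smul]
  have hBd : (Cᵀ * B * C).IsDiag := by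
    have : Cᵀ * B * C
        = (σ₂ - σ₁)⁻¹ • (Cᵀ * (A + σ₂ • B) * C - Cᵀ * (A + σ₁ • B) * C) := by
      conv_lhs => rw [hBeq]
      rw [Matrix.mul_smul, Matrix.smul_mul, mul_sub, sub_mul]
    rw [this]
    exact (hD2.sub hD1).smul _
  refine ⟨C, hdet, ?_, hBd⟩
  have hAeq : A = (A + σ₁ • B) - σ₁ • B := by abel
  have : Cᵀ * A * C = Cᵀ * (A + σ₁ • B) * C - σ₁ • (Cᵀ * B * C) := by
    conv_lhs => rw [hAeq]
    rw [mul_sub, sub_mul, Matrix.mul_smul, Matrix.smul_mul]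
  rw [this]
  exact hD1.sub (hBd.smul _)
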